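/- Let N ≥ 2 and α ≥ 0, and let u(λ_2) be the unit eigenvector of H_{αU}(P_N) for its second smallest eigenvalue λ_2, chosen with u_1(λ_2) > 0 and extended by u_0(λ_2) = u_1(λ_2), u_{N+1}(λ_2) = u_N(λ_2). Then the u(λ_2)-line has a node at or left of (N+1)/2: there exist an index m ∈ {1,…,N} and a real number x with m ≤ x ≤ m+1 and x ≤ (N+1)/2 such that (m+1−x)u_m(λ_2) + (x−m)u_{m+1}(λ_2) = 0. -/

import Mathlib

/-- The path Schrödinger operator `H_W(P_N)`; vertex `i : Fin N` has label `i + 1`. -/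
noncomputable def pathH (N : ℕ) (W : ℕ → ℝ) : Matrix (Fin N) (Fin N) ℝ :=
  Matrix.of fun i j =>
    if i = j then
      (if (i : ℕ) = 0 ∨ (i : ℕ) = N - 1 then (1 : ℝ) else 2) + W ((i : ℕ) + 1)
    else if (i : ℕ) + 1 = (j : ℕ) ∨ (j : ℕ) + 1 = (i : ℕ) then -1 else 0

/-- `μ` is an eigenvalue of the real matrix `A`. -/
def IsEigen {n : ℕ} (A : Matrix (Fin n) (Fin n) ℝ) (μ : ℝ) : Prop :=
  ∃ v : Fin n → ℝ, v ≠ 0 ∧ A.mulVec v = μ • v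

/-- `l1 < l2` are the two smallest eigenvalues of `A`. -/
def TwoSmallest {n : ℕ} (A : Matrix (Fin n) (Fin n) ℝ) (l1 l2 : ℝ) : Prop :=
  IsEigen A l1 ∧ IsEigen A l2 ∧ l1 < l2 ∧
    ∀ μ, IsEigen A μ → l1 ≤ μ ∧ (μ ≠ l1 → l2 ≤ μ)

namespace PathAux



lemma pathH_mulVec {N : ℕ} (hN : 2 ≤ N) (W : ℕ → ℝ) (v : ℕ → ℝ)
    (hv0 : v 0 = v 1) (hvN : v (N+1) = v N) (i : Fin N) :
    (pathH N W).mulVec (fun j : Fin N => v ((j : ℕ)+1)) i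
      = (2 + W ((i:ℕ)+1)) * v ((i:ℕ)+1) - v (i:ℕ) - v ((i:ℕ)+2) := by
  classical
  set F : ℕ → ℝ := fun n =>
    (if (i:ℕ) = n then (if (i:ℕ) = 0 ∨ (i:ℕ) = N - 1 then (1:ℝ) else 2) + W ((i:ℕ)+1)
     else if (i:ℕ) + 1 = n ∨ n + 1 = (i:ℕ) then -1 else 0) * v (n+1) with hF
  have hsum : (pathH N W).mulVec (fun j : Fin N => v ((j:ℕ)+1)) i
      = ∑ n ∈ Finset.range N, F n := by
    rw [← Fin.sum_univ_eq_sum_range]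
    simp only [Matrix.mulVec, dotProduct, pathH, Matrix.of_apply, hF]
    refine Finset.sum_congr rfl fun j _ => ?_
    by_cases hij : i = j
    · subst hij; simp
    · have h2 : ¬ ((i:ℕ) = (j:ℕ)) := fun hc => hij (Fin.ext hc)
      simp [hij, h2]
  have hfilter : ∑ n ∈ Finset.range N, F n
      = ∑ n ∈ (Finset.range N).filter
          (fun n => n = (i:ℕ)-1 ∨ n = (i:ℕ) ∨ n = (i:ℕ)+1), F n := by
    refine (Finset.sum_filter_of_ne ?_).symm
    intro n _ hn
    by_contra hc
    push_neg at hc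
    apply hn
    have h1 : ¬ ((i:ℕ) = n) := by omega
    have h2 : ¬ ((i:ℕ) + 1 = n ∨ n + 1 = (i:ℕ)) := by omega
    simp [hF, h1, h2]
  have hiN : (i:ℕ) < N := i.isLt
  rw [hsum, hfilter]
  rcases Nat.eq_zero_or_pos (i:ℕ) with hi0 | hipos
  · have hset : (Finset.range N).filter
        (fun n => n = (i:ℕ)-1 ∨ n = (i:ℕ) ∨ n = (i:ℕ)+1) = {0, 1} := by
      ext n; simp only [Finset.mem_filter, Finset.mem_range, Finset.mem_insert,
        Finset.mem_singleton]; omega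
    rw [hset, Finset.sum_pair (by omega : (0:ℕ) ≠ 1)]
    have hd : ((i:ℕ) = 0 ∨ (i:ℕ) = N - 1) := Or.inl hi0
    have hF0 : F 0 = (1 + W ((i:ℕ)+1)) * v 1 := by
      simp only [hF]
      rw [if_pos hi0, if_pos hd]
    have hF1 : F 1 = -v 2 := by
      have h1 : ¬ ((i:ℕ) = 1) := by omega
      have h2 : ((i:ℕ) + 1 = 1 ∨ 1 + 1 = (i:ℕ)) := by omega
      simp only [hF]
      rw [if_neg h1, if_pos h2]; ring
    rw [hF0, hF1, hi0]
    rw [show v (0:ℕ) = v 1 from hv0]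
    ring
  · rcases eq_or_ne (i:ℕ) (N-1) with hiN1 | hmid
    · have hset : (Finset.range N).filter
          (fun n => n = (i:ℕ)-1 ∨ n = (i:ℕ) ∨ n = (i:ℕ)+1) = {(i:ℕ)-1, (i:ℕ)} := by
        ext n; simp only [Finset.mem_filter, Finset.mem_range, Finset.mem_insert,
          Finset.mem_singleton]; omega
      rw [hset, Finset.sum_pair (by omega : (i:ℕ)-1 ≠ (i:ℕ))]
      have hFm : F ((i:ℕ)-1) = -v (i:ℕ) := by
        have h1 : ¬ ((i:ℕ) = (i:ℕ)-1) := by omega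
        have h2 : ((i:ℕ) + 1 = (i:ℕ)-1 ∨ ((i:ℕ)-1) + 1 = (i:ℕ)) := by omega
        have h3 : (i:ℕ)-1+1 = (i:ℕ) := by omega
        simp only [hF]
        rw [if_neg h1, if_pos h2, h3]; ring
      have hFi : F (i:ℕ) = (1 + W ((i:ℕ)+1)) * v ((i:ℕ)+1) := by
        have hd : ((i:ℕ) = 0 ∨ (i:ℕ) = N - 1) := Or.inr hiN1
        simp only [hF]
        simp [hd]
      rw [hFm, hFi]
      have hv' : v ((i:ℕ)+2) = v ((i:ℕ)+1) := by
        have : (i:ℕ)+2 = N+1 := by omega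
        have h2 : (i:ℕ)+1 = N := by omega
        rw [this, h2, hvN]
      rw [hv']
      ring
    · have hset : (Finset.range N).filter
          (fun n => n = (i:ℕ)-1 ∨ n = (i:ℕ) ∨ n = (i:ℕ)+1)
          = {(i:ℕ)-1, (i:ℕ), (i:ℕ)+1} := by
        ext n; simp only [Finset.mem_filter, Finset.mem_range, Finset.mem_insert,
          Finset.mem_singleton]; omega
      rw [hset]
      rw [Finset.sum_insert (by simp only [Finset.mem_insert, Finset.mem_singleton]; omega),
        Finset.sum_pair (by omega : (i:ℕ) ≠ (i:ℕ)+1)]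
      have hFm : F ((i:ℕ)-1) = -v (i:ℕ) := by
        have h1 : ¬ ((i:ℕ) = (i:ℕ)-1) := by omega
        have h2 : ((i:ℕ) + 1 = (i:ℕ)-1 ∨ ((i:ℕ)-1) + 1 = (i:ℕ)) := by omega
        have h3 : (i:ℕ)-1+1 = (i:ℕ) := by omega
        simp only [hF]
        rw [if_neg h1, if_pos h2, h3]; ring
      have hFi : F (i:ℕ) = (2 + W ((i:ℕ)+1)) * v ((i:ℕ)+1) := by
        have hd : ¬ ((i:ℕ) = 0 ∨ (i:ℕ) = N - 1) := by omega
        simp only [hF]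
        simp [hd]
      have hFp : F ((i:ℕ)+1) = -v ((i:ℕ)+2) := by
        have h1 : ¬ ((i:ℕ) = (i:ℕ)+1) := by omega
        have h2 : ((i:ℕ) + 1 = (i:ℕ)+1 ∨ ((i:ℕ)+1) + 1 = (i:ℕ)) := by omega
        simp only [hF]
        rw [show (i:ℕ)+1+1 = (i:ℕ)+2 from rfl]
        simp [h1, h2]
      rw [hFm, hFi, hFp]
      ring


/-- Neumann-style extension of a `Fin N` vector to `ℕ`, vertex `j` label `j`. -/
def extV {N : ℕ} (hN : 1 ≤ N) (z : Fin N → ℝ) : ℕ → ℝ := fun j =>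
  if h : 1 ≤ j ∧ j ≤ N then z ⟨j-1, by omega⟩
  else if j = 0 then z ⟨0, by omega⟩ else z ⟨N-1, by omega⟩

lemma extV_zero {N : ℕ} (hN : 1 ≤ N) (z : Fin N → ℝ) : extV hN z 0 = extV hN z 1 := by
  simp [extV, hN]

lemma extV_top {N : ℕ} (hN : 1 ≤ N) (z : Fin N → ℝ) : extV hN z (N+1) = extV hN z N := by
  have h1 : ¬ (1 ≤ N+1 ∧ N+1 ≤ N) := by omega
  have h2 : (1 ≤ N ∧ N ≤ N) := by omega
  simp [extV, h1, h2]

lemma extV_vec {N : ℕ} (hN : 1 ≤ N) (z : Fin N → ℝ) :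
    (fun i : Fin N => extV hN z ((i:ℕ)+1)) = z := by
  funext i
  have h : (1 ≤ (i:ℕ)+1 ∧ (i:ℕ)+1 ≤ N) := by omega
  simp only [extV, dif_pos h]
  congr 1

lemma rec_of_eigen {N : ℕ} (hN : 2 ≤ N) (W : ℕ → ℝ) (μ : ℝ) (v : ℕ → ℝ)
    (hv0 : v 0 = v 1) (hvN : v (N+1) = v N)
    (heq : (pathH N W).mulVec (fun i : Fin N => v ((i:ℕ)+1))
      = μ • fun i : Fin N => v ((i:ℕ)+1)) :
    ∀ j, 1 ≤ j → j ≤ N → v (j-1) + v (j+1) = (2 + W j - μ) * v j := by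
  intro j h1 h2
  have h := congrFun heq ⟨j-1, by omega⟩
  rw [pathH_mulVec hN W v hv0 hvN] at h
  simp only [Pi.smul_apply, smul_eq_mul] at h
  have h' : (2 + W ((j-1)+1)) * v ((j-1)+1) - v (j-1) - v ((j-1)+2)
      = μ * v ((j-1)+1) := h
  have hj : j - 1 + 1 = j := by omega
  have hj2 : j - 1 + 2 = j + 1 := by omega
  rw [hj, hj2] at h'
  linarith

lemma rec_zero {N : ℕ} (C : ℕ → ℝ) (v : ℕ → ℝ)
    (hrec : ∀ j, 1 ≤ j → j ≤ N → v (j-1) + v (j+1) = C j * v j)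
    (h0 : v 0 = 0) (h1 : v 1 = 0) : ∀ j, j ≤ N+1 → v j = 0 := by
  intro j
  induction j using Nat.strong_induction_on with
  | _ j ih =>
    intro hj
    match j, hj with
    | 0, _ => exact h0
    | 1, _ => exact h1
    | (m+2), hj =>
      have ha := hrec (m+1) (by omega) (by omega)
      have h2 := ih (m+1) (by omega) (by omega)
      have h3 := ih m (by omega) (by omega)
      have hm : (m+1) - 1 = m := by omega
      rw [hm, h2, h3] at ha
      have : v (m+1+1) = 0 := by linarith
      exact this


lemma eigen_zero_of_first {N : ℕ} (hN : 2 ≤ N) (W : ℕ → ℝ) (μ : ℝ) (z : Fin N → ℝ)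
    (hz : (pathH N W).mulVec z = μ • z) (hz0 : z ⟨0, by omega⟩ = 0) : z = 0 := by
  have hN1 : 1 ≤ N := by omega
  set y := extV hN1 z with hy
  have hveq : (fun i : Fin N => y ((i:ℕ)+1)) = z := extV_vec hN1 z
  have hrec := rec_of_eigen hN W μ y (extV_zero hN1 z) (extV_top hN1 z)
    (by rw [hveq]; exact hz)
  have hy1 : y 1 = 0 := by
    have := congrFun hveq ⟨0, by omega⟩
    simpa using this.trans hz0
  have hy0 : y 0 = 0 := (extV_zero hN1 z).trans hy1
  have hall := rec_zero (fun j => 2 + W j - μ) y hrec hy0 hy1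
  funext i
  have := congrFun hveq i
  rw [← this]
  exact hall ((i:ℕ)+1) (by omega)

lemma eigen_unique {N : ℕ} (hN : 2 ≤ N) (W : ℕ → ℝ) (μ : ℝ) (v w : Fin N → ℝ)
    (hv : (pathH N W).mulVec v = μ • v) (hw : (pathH N W).mulVec w = μ • w)
    (hv0 : v ⟨0, by omega⟩ ≠ 0) : ∃ c : ℝ, w = c • v := by
  set c : ℝ := w ⟨0, by omega⟩ / v ⟨0, by omega⟩ with hc
  refine ⟨c, ?_⟩
  set z : Fin N → ℝ := w - c • v with hzdef
  have hz : (pathH N W).mulVec z = μ • z := by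
    rw [hzdef, Matrix.mulVec_sub, Matrix.mulVec_smul, hv, hw]
    ext i; simp; ring
  have hz0 : z ⟨0, by omega⟩ = 0 := by
    simp only [hzdef, Pi.sub_apply, Pi.smul_apply, smul_eq_mul, hc]
    field_simp
    ring
  have hzz := eigen_zero_of_first hN W μ z hz hz0
  have h2 : w - c • v = 0 := hzz
  funext i
  have := congrFun h2 i
  simp only [Pi.sub_apply, Pi.zero_apply, sub_eq_zero] at this
  simpa using this
lemma spectral_bound {N : ℕ} (A : Matrix (Fin N) (Fin N) ℝ) (hA : A.IsHermitian)
    (l1 l2 : ℝ)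
    (g : Fin N → ℝ)
    (u' : Fin N → ℝ)
    (hsimp1 : ∀ w : Fin N → ℝ, A.mulVec w = l1 • w → ∃ c : ℝ, w = c • g)
    (hsimp2 : ∀ w : Fin N → ℝ, A.mulVec w = l2 • w → ∃ c : ℝ, w = c • u')
    (hmin : ∀ μ, IsEigen A μ → l1 ≤ μ ∧ (μ ≠ l1 → l2 ≤ μ))
    (z : Fin N → ℝ) (hz : ∑ i, z i * g i = 0) :
    l2 * (∑ i, z i * z i) ≤ ∑ i, z i * A.mulVec z i ∧
      (∑ i, z i * A.mulVec z i = l2 * (∑ i, z i * z i) → ∃ c : ℝ, z = c • u') := by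
  classical
  set b := hA.eigenvectorBasis with hb
  set ev := hA.eigenvalues with hev
  have hbe : ∀ i, A.mulVec (b i) = ev i • ⇑(b i) := fun i => hA.mulVec_eigenvectorBasis i
  have hbe' : ∀ i k, A.mulVec (b i) k = ev i * (b i) k := by
    intro i k
    have := congrFun (hbe i) k
    simpa using this
  have horth : ∀ i j, (inner ℝ (b i) (b j) : ℝ) = if i = j then 1 else 0 :=
    orthonormal_iff_ite.mp b.orthonormal
  have hdot : ∀ x y : EuclideanSpace ℝ (Fin N), (inner ℝ x y : ℝ) = ∑ i, x i * y i := by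
    intro x y
    simp [PiLp.inner_apply, RCLike.inner_apply, mul_comm]
  set zE : EuclideanSpace ℝ (Fin N) := WithLp.toLp 2 z with hzE
  set c : Fin N → ℝ := fun i => b.repr zE i with hc
  have key1 : zE = ∑ i, c i • b i := (b.sum_repr zE).symm
  have pair : ∀ (d e : Fin N → ℝ),
      (inner ℝ (∑ j, d j • b j) (∑ i, e i • b i) : ℝ) = ∑ i, d i * e i := by
    intro d e
    rw [sum_inner]
    simp only [inner_sum, inner_smul_left, inner_smul_right, horth, conj_trivial,
      mul_ite, mul_one, mul_zero, Finset.sum_ite_eq, Finset.mem_univ, if_true]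
    exact Finset.sum_congr rfl fun i _ => mul_comm _ _
  have key2 : (WithLp.toLp 2 (A.mulVec z) : EuclideanSpace ℝ (Fin N)) = ∑ i, (ev i * c i) • b i := by
    have h1 : A.mulVec zE = A.mulVec (∑ i, c i • b i) := by
      rw [key1]; simp [WithLp.ofLp_sum, WithLp.ofLp_smul]
    have h2 : A.mulVec (∑ i, (c i • b i : EuclideanSpace ℝ (Fin N)))
        = ∑ i, c i • A.mulVec (b i) := by
      rw [show (A.mulVec : (Fin N → ℝ) → (Fin N → ℝ)) = A.mulVecLin from rfl]
      rw [map_sum]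
      simp [Matrix.mulVecLin_apply]
    ext j
    have h3 := congrFun (h1.trans h2) j
    rw [show (WithLp.toLp 2 (A.mulVec z) : EuclideanSpace ℝ (Fin N)) j = A.mulVec zE j from rfl, h3]
    rw [Finset.sum_apply, WithLp.ofLp_sum, Finset.sum_apply]
    refine Finset.sum_congr rfl fun i _ => ?_
    rw [show ((ev i * c i) • b i) j = (ev i * c i) * (b i) j from rfl,
      show (c i • A.mulVec (b i)) j = c i * (A.mulVec (b i) j) from rfl, hbe' i j]
    ring
  have hzAz : ∑ i, z i * A.mulVec z i = ∑ i, c i * (ev i * c i) := by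
    have := pair c (fun i => ev i * c i)
    rw [← key1, ← key2] at this
    rw [← this, hdot]
  have hzz : ∑ i, z i * z i = ∑ i, c i * c i := by
    have := pair c c
    rw [← key1] at this
    rw [← this, hdot]
  have hcl1 : ∀ i, ev i = l1 → c i = 0 := by
    intro i hevi
    obtain ⟨d, hd⟩ := hsimp1 (b i) (by rw [hbe i, hevi])
    have hd' : ∀ k, (b i) k = d * g k := by
      intro k
      have := congrFun hd k
      simpa using this
    have h1 : c i = ∑ k, (b i) k * zE k := by
      show b.repr zE i = _
      rw [b.repr_apply_apply, hdot]
    rw [h1]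
    calc ∑ k, (b i) k * zE k = d * ∑ k, zE k * g k := by
          rw [Finset.mul_sum]
          exact Finset.sum_congr rfl fun k _ => by rw [hd' k]; ring
      _ = 0 := by rw [hz]; ring
  have hestim : ∀ i, ev i ≠ l1 → l2 ≤ ev i := by
    intro i hne
    have hEig : IsEigen A (ev i) := by
      refine ⟨b i, ?_, by rw [hbe i]⟩
      have := b.orthonormal.ne_zero i
      intro hcon
      apply this
      ext k
      exact congrFun hcon k
    exact (hmin (ev i) hEig).2 hne
  have hterm : ∀ i, l2 * (c i * c i) ≤ c i * (ev i * c i) := by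
    intro i
    by_cases hi : ev i = l1
    · rw [hcl1 i hi]; ring_nf; exact le_refl 0
    · have := hestim i hi
      nlinarith [sq_nonneg (c i)]
  constructor
  · rw [hzAz, hzz, Finset.mul_sum]
    exact Finset.sum_le_sum fun i _ => hterm i
  · intro heq
    rw [hzAz, hzz, Finset.mul_sum] at heq
    have hsum0 : ∑ i, (c i * (ev i * c i) - l2 * (c i * c i)) = 0 := by
      rw [Finset.sum_sub_distrib, heq, sub_self]
    have hterm0 : ∀ i ∈ Finset.univ, c i * (ev i * c i) - l2 * (c i * c i) = 0 :=
      (Finset.sum_eq_zero_iff_of_nonneg fun i _ => by linarith [hterm i]).mp hsum0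
    have hspan : ∀ i : Fin N, ∃ e : ℝ, ∀ k, c i * (b i) k = e * u' k := by
      intro i
      by_cases hci : c i = 0
      · exact ⟨0, fun k => by rw [hci]; ring⟩
      · have hevl2 : ev i = l2 := by
          have h0 := hterm0 i (Finset.mem_univ i)
          have : (ev i - l2) * (c i * c i) = 0 := by ring_nf; ring_nf at h0; linarith
          rcases mul_eq_zero.mp this with h | h
          · linarith
          · exact absurd h (by positivity)
        obtain ⟨d, hd⟩ := hsimp2 (b i) (by rw [hbe i, hevl2])
        refine ⟨c i * d, fun k => ?_⟩
        have := congrFun hd k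
        simp only [Pi.smul_apply, smul_eq_mul] at this
        rw [show (b i) k = d * u' k from this]
        ring
    choose e he using hspan
    refine ⟨∑ i, e i, ?_⟩
    funext k
    have h1 : zE k = ∑ i, (c i • b i : EuclideanSpace ℝ (Fin N)) k := by
      rw [key1, WithLp.ofLp_sum, Finset.sum_apply]
    have : z k = ∑ i, c i * (b i) k := by
      rw [show z k = zE k from rfl, h1]
      exact Finset.sum_congr rfl fun i _ => rfl
    have h2 : zE k = ∑ i, c i * (b i) k := this
    rw [this, show ((∑ i, e i) • u') k = (∑ i, e i) * u' k from rfl]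
    rw [show ∑ i, c i * (b i) k = ∑ i, e i * u' k from
      Finset.sum_congr rfl fun i _ => he i k]
    rw [← Finset.sum_mul]

lemma pathH_isHermitian (N : ℕ) (W : ℕ → ℝ) : (pathH N W).IsHermitian := by
  rw [Matrix.IsHermitian]
  ext i j
  rw [Matrix.conjTranspose_apply]
  by_cases h : i = j
  · subst h; simp [pathH]
  · have h' : ¬ j = i := fun hc => h hc.symm
    simp only [pathH, Matrix.of_apply, if_neg h, if_neg h', star_trivial]
    exact if_congr (or_comm) rfl rfl

lemma caseA {N : ℕ} (hN : 2 ≤ N) (l1 l2 : ℝ) (hl12 : l1 < l2) (C : ℕ → ℝ)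
    (u w : ℕ → ℝ)
    (hrecu : ∀ j, 1 ≤ j → j ≤ N → u (j-1) + u (j+1) = (C j - l2) * u j)
    (hrecw : ∀ j, 1 ≤ j → j ≤ N → w (j-1) + w (j+1) = (C j - l1) * w j)
    (hu0 : u 0 = u 1) (huN : u (N+1) = u N) (hw0 : w 0 = w 1) (hwN : w (N+1) = w N)
    (hupos : ∀ j, 1 ≤ j → j ≤ N → 0 < u j)
    (hwpos : ∃ j, 1 ≤ j ∧ j ≤ N ∧ 0 < w j) : False := by
  obtain ⟨j1, hj11, hj1N, hj1pos⟩ := hwpos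
  have hne : (Finset.Icc 1 N).Nonempty := ⟨1, by simp; omega⟩
  obtain ⟨j0, hj0mem, hj0max⟩ :=
    Finset.exists_max_image (Finset.Icc 1 N) (fun j => w j / u j) hne
  simp only [Finset.mem_Icc] at hj0mem
  obtain ⟨hj01, hj0N⟩ := hj0mem
  set cmax := w j0 / u j0 with hcmax
  have hcu : ∀ j, 1 ≤ j → j ≤ N → w j ≤ cmax * u j := by
    intro j h1 h2
    have hle := hj0max j (by simp only [Finset.mem_Icc]; omega)
    have hu := hupos j h1 h2
    calc w j = (w j / u j) * u j := by field_simp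
      _ ≤ cmax * u j := mul_le_mul_of_nonneg_right hle hu.le
  have hcpos : 0 < cmax := by
    have h1 := hj0max j1 (by simp only [Finset.mem_Icc]; omega)
    have := div_pos hj1pos (hupos j1 hj11 hj1N)
    exact lt_of_lt_of_le this h1
  have h0 : w j0 = cmax * u j0 := by
    have := hupos j0 hj01 hj0N
    rw [hcmax, div_mul_cancel₀ _ this.ne']
  have e1 : w (j0-1) + w (j0+1) = (C j0 - l1) * w j0 := hrecw j0 hj01 hj0N
  have e2 : u (j0-1) + u (j0+1) = (C j0 - l2) * u j0 := hrecu j0 hj01 hj0N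
  have hA : w (j0-1) ≤ cmax * u (j0-1) := by
    rcases Nat.eq_or_lt_of_le hj01 with h | h
    · have : j0 - 1 = 0 := by omega
      rw [this, hw0, hu0]
      exact hcu 1 (by omega) (by omega)
    · exact hcu (j0-1) (by omega) (by omega)
  have hB : w (j0+1) ≤ cmax * u (j0+1) := by
    rcases Nat.eq_or_lt_of_le hj0N with h | h
    · rw [h, hwN, huN]
      exact hcu N (by omega) (by omega)
    · exact hcu (j0+1) (by omega) (by omega)
  have e3 : (C j0 - l1) * (cmax * u j0) ≤ cmax * ((C j0 - l2) * u j0) := by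
    calc (C j0 - l1) * (cmax * u j0) = (C j0 - l1) * w j0 := by rw [← h0]
      _ = w (j0-1) + w (j0+1) := e1.symm
      _ ≤ cmax * u (j0-1) + cmax * u (j0+1) := by linarith
      _ = cmax * (u (j0-1) + u (j0+1)) := by ring
      _ = cmax * ((C j0 - l2) * u j0) := by rw [e2]
  have hup := hupos j0 hj01 hj0N
  nlinarith [mul_pos hcpos hup]

lemma no_second_rise {N : ℕ} (hN : 2 ≤ N) (W : ℕ → ℝ) (l1 l2 : ℝ)
    (u : ℕ → ℝ) (hu0 : u 0 = u 1) (huN : u (N+1) = u N)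
    (hue : (pathH N W).mulVec (fun i : Fin N => u ((i:ℕ)+1))
      = l2 • fun i : Fin N => u ((i:ℕ)+1))
    (hu1 : 0 < u 1)
    (g : Fin N → ℝ) (hg : (pathH N W).mulVec g = l1 • g) (hgne : g ≠ 0)
    (hmin : ∀ μ, IsEigen (pathH N W) μ → l1 ≤ μ ∧ (μ ≠ l1 → l2 ≤ μ))
    (t s : ℕ) (ht2 : 2 ≤ t) (hts : t ≤ s) (hsN : s + 1 ≤ N)
    (hpos : ∀ j, 1 ≤ j → j < t → 0 < u j)
    (hmid : ∀ j, t ≤ j → j ≤ s → u j ≤ 0)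
    (hs1 : 0 < u (s+1)) : False := by
  classical
  set A := pathH N W with hA'
  have hA : A.IsHermitian := pathH_isHermitian N W
  set u' : Fin N → ℝ := fun i => u ((i:ℕ)+1) with hu'
  have hu'0 : u' ⟨0, by omega⟩ ≠ 0 := ne_of_gt hu1
  have hg0 : g ⟨0, by omega⟩ ≠ 0 := by
    intro h0
    exact hgne (eigen_zero_of_first hN W l1 g hg h0)
  have hsimp1 : ∀ w : Fin N → ℝ, A.mulVec w = l1 • w → ∃ c : ℝ, w = c • g :=
    fun w hw => eigen_unique hN W l1 g w hg hw hg0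
  have hsimp2 : ∀ w : Fin N → ℝ, A.mulVec w = l2 • w → ∃ c : ℝ, w = c • u' :=
    fun w hw => eigen_unique hN W l2 u' w hue hw hu'0
  have hrecu := rec_of_eigen hN W l2 u hu0 huN hue
  -- choice of coefficients
  set D1 : ℝ := ∑ i : Fin N, (if (i:ℕ)+1 < t then u ((i:ℕ)+1) else 0) * g i with hD1
  set D2 : ℝ := ∑ i : Fin N,
    (if t ≤ (i:ℕ)+1 ∧ (i:ℕ)+1 ≤ s then u ((i:ℕ)+1) else 0) * g i with hD2
  set c1 : ℝ := if D1 = 0 ∧ D2 = 0 then 1 else D2 with hc1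
  set c2 : ℝ := if D1 = 0 ∧ D2 = 0 then 0 else -D1 with hc2
  have hc12 : ¬ (c1 = 0 ∧ c2 = 0) := by
    by_cases hd : D1 = 0 ∧ D2 = 0
    · rw [hc1, if_pos hd]; intro hcon; exact one_ne_zero hcon.1
    · rw [hc1, hc2, if_neg hd, if_neg hd]
      intro hcon
      exact hd ⟨by linarith [hcon.2], hcon.1⟩
  set zn : ℕ → ℝ := fun j => if j < t then c1 * u j else if j ≤ s then c2 * u j else 0
    with hzn
  have hzn_lt : ∀ j, j < t → zn j = c1 * u j := by
    intro j hj; simp only [hzn]; rw [if_pos hj]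
  have hzn_mid : ∀ j, t ≤ j → j ≤ s → zn j = c2 * u j := by
    intro j h1 h2; simp only [hzn]; rw [if_neg (by omega), if_pos h2]
  have hzn_hi : ∀ j, s < j → zn j = 0 := by
    intro j h1; simp only [hzn]; rw [if_neg (by omega), if_neg (by omega)]
  set z : Fin N → ℝ := fun i => zn ((i:ℕ)+1) with hz
  -- z ⊥ g
  have hsplit : ∀ j, zn j = c1 * (if j < t then u j else 0)
      + c2 * (if t ≤ j ∧ j ≤ s then u j else 0) := by
    intro j
    rcases Nat.lt_or_ge j t with h | h
    · rw [hzn_lt j h, if_pos h, if_neg (by omega)]; ring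
    · rcases le_or_gt j s with h2 | h2
      · rw [hzn_mid j h h2, if_neg (by omega), if_pos ⟨h, h2⟩]; ring
      · rw [hzn_hi j h2, if_neg (by omega), if_neg (by omega)]; ring
  have hzg : ∑ i : Fin N, z i * g i = 0 := by
    have h1 : ∑ i : Fin N, z i * g i = c1 * D1 + c2 * D2 := by
      rw [hD1, hD2, Finset.mul_sum, Finset.mul_sum, ← Finset.sum_add_distrib]
      refine Finset.sum_congr rfl fun i _ => ?_
      show zn ((i:ℕ)+1) * g i = _
      rw [hsplit ((i:ℕ)+1)]
      ring
    rw [h1]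
    by_cases hd : D1 = 0 ∧ D2 = 0
    · rw [hc1, hc2, if_pos hd, if_pos hd, hd.1, hd.2]; ring
    · rw [hc1, hc2, if_neg hd, if_neg hd]; ring
  -- the quadratic form
  have hz0 : zn 0 = zn 1 := by
    rw [hzn_lt 0 (by omega), hzn_lt 1 (by omega), hu0]
  have hzN1 : zn (N+1) = zn N := by
    rw [hzn_hi (N+1) (by omega), hzn_hi N (by omega)]
  have hrow := pathH_mulVec hN W zn hz0 hzN1
  set G : ℕ → ℝ := fun n =>
    zn (n+1) * ((2 + W (n+1) - l2) * zn (n+1) - zn n - zn (n+2)) with hG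
  have hQ1 : ∑ i : Fin N, (z i * A.mulVec z i - l2 * (z i * z i))
      = ∑ n ∈ Finset.range N, G n := by
    rw [← Fin.sum_univ_eq_sum_range]
    refine Finset.sum_congr rfl fun i _ => ?_
    rw [show A.mulVec z i = (2 + W ((i:ℕ)+1)) * zn ((i:ℕ)+1) - zn (i:ℕ) - zn ((i:ℕ)+2)
      from hrow i]
    show _ = zn ((i:ℕ)+1) * ((2 + W ((i:ℕ)+1) - l2) * zn ((i:ℕ)+1) - zn (i:ℕ) - zn ((i:ℕ)+2))
    ring
  have hGzero : ∀ n ∈ Finset.range N, G n ≠ 0 →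
      (n = t-2 ∨ n = t-1 ∨ n = s-1) := by
    intro n hn hne
    rw [Finset.mem_range] at hn
    by_contra hcon
    push_neg at hcon
    apply hne
    rcases Nat.lt_or_ge (n+1) t with h | h
    · -- n+1 ≤ t-2, all in c1 region
      have hn2 : n + 2 < t := by omega
      have e := hrecu (n+1) (by omega) (by omega)
      rw [show (n+1) - 1 = n from by omega] at e
      show zn (n+1) * ((2 + W (n+1) - l2) * zn (n+1) - zn n - zn (n+1+1)) = 0
      rw [show n+1+1 = n+2 from rfl]
      rw [hzn_lt (n+1) h, hzn_lt n (by omega), hzn_lt (n+2) hn2]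
      have e' : u n + u (n+2) = (2 + W (n+1) - l2) * u (n+1) := e
      linear_combination (-(c1 * c1 * u (n+1))) * e'
    · rcases le_or_gt (n+2) s with h2 | h2
      · -- t+1 ≤ n+1, n+2 ≤ s : all in c2 region
        have hnt : t ≤ n := by omega
        have e := hrecu (n+1) (by omega) (by omega)
        rw [show (n+1) - 1 = n from by omega] at e
        show zn (n+1) * ((2 + W (n+1) - l2) * zn (n+1) - zn n - zn (n+1+1)) = 0
        rw [show n+1+1 = n+2 from rfl]
        rw [hzn_mid (n+1) (by omega) (by omega), hzn_mid n hnt (by omega),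
          hzn_mid (n+2) (by omega) h2]
        have e' : u n + u (n+2) = (2 + W (n+1) - l2) * u (n+1) := e
        linear_combination (-(c2 * c2 * u (n+1))) * e'
      · -- n+1 ≥ s+1 : zn (n+1) = 0
        have hsn : s < n + 1 := by omega
        show zn (n+1) * ((2 + W (n+1) - l2) * zn (n+1) - zn n - zn (n+1+1)) = 0
        rw [hzn_hi (n+1) hsn]
        ring
  have hfilter : ∑ n ∈ Finset.range N, G n
      = ∑ n ∈ (Finset.range N).filter (fun n => n = t-2 ∨ n = t-1 ∨ n = s-1), G n :=
    (Finset.sum_filter_of_ne hGzero).symm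
  -- value of G at the three special points
  have eA := hrecu (t-1) (by omega) (by omega)
  rw [show (t-1) - 1 = t-2 from by omega, show (t-1) + 1 = t from by omega] at eA
  have eB := hrecu t (by omega) (by omega)
  rw [show t - 1 = t-1 from rfl] at eB
  have hGt2 : G (t-2) = u (t-1) * u t * (c1 * (c1 - c2)) := by
    show zn (t-2+1) * ((2 + W (t-2+1) - l2) * zn (t-2+1) - zn (t-2) - zn (t-2+2)) = _
    rw [show t-2+1 = t-1 from by omega, show t-2+2 = t from by omega]
    rw [hzn_lt (t-1) (by omega), hzn_lt (t-2) (by omega), hzn_mid t (by omega) hts]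
    linear_combination (-(c1 * c1 * u (t-1))) * eA
  have hGs1 : G (s-1) = (if t = s then u (t-1) * u t * (c2 * (c2 - c1))
      + u s * u (s+1) * (c2 * c2) else u s * u (s+1) * (c2 * c2)) := by
    by_cases hteqs : t = s
    · rw [if_pos hteqs]
      subst hteqs
      show zn (t-1+1) * ((2 + W (t-1+1) - l2) * zn (t-1+1) - zn (t-1) - zn (t-1+2)) = _
      rw [show t-1+1 = t from by omega, show t-1+2 = t+1 from by omega]
      rw [hzn_mid t (by omega) (by omega), hzn_lt (t-1) (by omega),
        hzn_hi (t+1) (by omega)]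
      linear_combination (-(c2 * c2 * u t)) * eB
    · rw [if_neg hteqs]
      have e := hrecu s (by omega) (by omega)
      show zn (s-1+1) * ((2 + W (s-1+1) - l2) * zn (s-1+1) - zn (s-1) - zn (s-1+2)) = _
      rw [show s-1+1 = s from by omega, show s-1+2 = s+1 from by omega]
      rw [hzn_mid s (by omega) (by omega), hzn_mid (s-1) (by omega) (by omega),
        hzn_hi (s+1) (by omega)]
      linear_combination (-(c2 * c2 * u s)) * e
  have hGt1 : t < s → G (t-1) = u (t-1) * u t * (c2 * (c2 - c1)) := by
    intro hlt
    show zn (t-1+1) * ((2 + W (t-1+1) - l2) * zn (t-1+1) - zn (t-1) - zn (t-1+2)) = _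
    rw [show t-1+1 = t from by omega, show t-1+2 = t+1 from by omega]
    rw [hzn_mid t (by omega) (by omega), hzn_lt (t-1) (by omega),
      hzn_mid (t+1) (by omega) (by omega)]
    linear_combination (-(c2 * c2 * u t)) * eB
  have hQval : ∑ n ∈ Finset.range N, G n
      = u (t-1) * u t * (c1 - c2)^2 + u s * u (s+1) * c2^2 := by
    rw [hfilter]
    rcases Nat.lt_or_ge t s with hlt | hge
    · have hset : (Finset.range N).filter (fun n => n = t-2 ∨ n = t-1 ∨ n = s-1)
          = {t-2, t-1, s-1} := by
        ext n
        simp only [Finset.mem_filter, Finset.mem_range, Finset.mem_insert,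
          Finset.mem_singleton]
        omega
      rw [hset]
      rw [Finset.sum_insert (by simp only [Finset.mem_insert, Finset.mem_singleton]; omega),
        Finset.sum_pair (by omega : t-1 ≠ s-1)]
      rw [hGt2, hGt1 hlt, hGs1, if_neg (by omega)]
      ring
    · have hteq : t = s := by omega
      have hset : (Finset.range N).filter (fun n => n = t-2 ∨ n = t-1 ∨ n = s-1)
          = {t-2, t-1} := by
        ext n
        simp only [Finset.mem_filter, Finset.mem_range, Finset.mem_insert,
          Finset.mem_singleton]
        omega
      rw [hset, Finset.sum_pair (by omega : t-2 ≠ t-1)]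
      rw [hGt2, show t-1 = s-1 from by omega, hGs1, if_pos hteq]
      rw [← hteq]
      ring
  -- sign information
  have hβ : u (t-1) * u t ≤ 0 :=
    mul_nonpos_of_nonneg_of_nonpos (hpos (t-1) (by omega) (by omega)).le
      (hmid t le_rfl hts)
  have hγ : u s * u (s+1) ≤ 0 :=
    mul_nonpos_of_nonpos_of_nonneg (hmid s hts le_rfl) hs1.le
  have hQle : ∑ i : Fin N, (z i * A.mulVec z i - l2 * (z i * z i)) ≤ 0 := by
    rw [hQ1, hQval]
    nlinarith [sq_nonneg (c1 - c2), sq_nonneg c2]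
  -- spectral bound
  obtain ⟨hge, heqcase⟩ := spectral_bound A hA l1 l2 g u' hsimp1 hsimp2 hmin z hzg
  have hsum_split : ∑ i : Fin N, (z i * A.mulVec z i - l2 * (z i * z i))
      = (∑ i : Fin N, z i * A.mulVec z i) - l2 * ∑ i : Fin N, z i * z i := by
    rw [Finset.sum_sub_distrib, Finset.mul_sum]
  have heq : ∑ i : Fin N, z i * A.mulVec z i = l2 * ∑ i : Fin N, z i * z i := by
    rw [hsum_split] at hQle
    linarith
  obtain ⟨c, hcu⟩ := heqcase heq
  -- z vanishes at index s (label s+1) but u' does not, so c = 0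
  have hzs : z ⟨s, by omega⟩ = 0 := hzn_hi (s+1) (by omega)
  have hc0 : c = 0 := by
    have := congrFun hcu ⟨s, by omega⟩
    rw [hzs] at this
    have hus : u' ⟨s, by omega⟩ = u (s+1) := rfl
    simp only [Pi.smul_apply, smul_eq_mul, hus] at this
    rcases mul_eq_zero.mp this.symm with h | h
    · exact h
    · exact absurd h (ne_of_gt hs1)
  have hz_all : z = 0 := by rw [hcu, hc0, zero_smul]
  -- but z has a nonzero entry
  by_cases hc1z : c1 = 0
  · have hc2z : c2 ≠ 0 := fun h => hc12 ⟨hc1z, h⟩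
    by_cases hut : u t = 0
    · -- u (t+1) = -u (t-1) < 0, and t < s
      have hut1 : u (t+1) = -u (t-1) := by
        have := eB
        rw [hut] at this
        linarith [this]
      have htS : t < s := by
        rcases Nat.eq_or_lt_of_le hts with h | h
        · exfalso
          rw [← h] at hs1
          have := hpos (t-1) (by omega) (by omega)
          rw [hut1] at hs1
          linarith
        · exact h
      have : z ⟨t, by omega⟩ = c2 * u (t+1) := hzn_mid (t+1) (by omega) (by omega)
      rw [congrFun hz_all ⟨t, by omega⟩] at this
      have hu' : u (t+1) ≠ 0 := by
        rw [hut1]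
        have := hpos (t-1) (by omega) (by omega)
        intro hcon
        linarith [neg_eq_zero.mp hcon]
      exact hu' (by
        rcases mul_eq_zero.mp this.symm with h | h
        · exact absurd h hc2z
        · exact h)
    · have hzt : z ⟨t-1, by omega⟩ = zn ((t-1)+1) := rfl
      rw [show (t-1)+1 = t from by omega] at hzt
      have : z ⟨t-1, by omega⟩ = c2 * u t := hzt.trans (hzn_mid t le_rfl hts)
      rw [congrFun hz_all ⟨t-1, by omega⟩] at this
      rcases mul_eq_zero.mp this.symm with h | h
      · exact hc2z h
      · exact hut h
  · have : z ⟨0, by omega⟩ = c1 * u 1 := hzn_lt 1 (by omega)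
    rw [congrFun hz_all ⟨0, by omega⟩] at this
    rcases mul_eq_zero.mp this.symm with h | h
    · exact hc1z h
    · exact absurd h (ne_of_gt hu1)
end PathAux

set_option maxHeartbeats 2000000 in
/-- the extended unit eigenvector `u` of `H_{αU}(P_N)` (`α ≥ 0`) for the
second smallest eigenvalue, normalized with `u 1 > 0`, has a node of its `u`-line at or
left of `(N+1)/2`. -/
theorem path_node_left_of_center (N : ℕ) (hN : 2 ≤ N) (α : ℝ) (hα : 0 ≤ α)
    (l1 l2 : ℝ)
    (h : TwoSmallest (pathH N (fun i => α * ((i : ℝ) - 1))) l1 l2)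
    (u : ℕ → ℝ)
    (hue : (pathH N (fun i => α * ((i : ℝ) - 1))).mulVec
        (fun i : Fin N => u ((i : ℕ) + 1)) = l2 • fun i : Fin N => u ((i : ℕ) + 1))
    (hun : ∑ i ∈ Finset.Icc 1 N, u i ^ 2 = 1)
    (hu1 : 0 < u 1) (hl : u 0 = u 1) (hr : u (N + 1) = u N) :
    ∃ m : ℕ, 1 ≤ m ∧ m ≤ N ∧ ∃ x : ℝ,
      (m : ℝ) ≤ x ∧ x ≤ (m : ℝ) + 1 ∧ x ≤ ((N : ℝ) + 1) / 2 ∧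
      ((m : ℝ) + 1 - x) * u m + (x - (m : ℝ)) * u (m + 1) = 0 := by
  classical
  obtain ⟨hE1, hE2, hl12, hmin⟩ := h
  set W : ℕ → ℝ := fun i => α * ((i : ℝ) - 1) with hW
  have hrecu := PathAux.rec_of_eigen hN W l2 u hl hr hue
  have hN1 : 1 ≤ N := by omega
  by_cases hall : ∀ j, 1 ≤ j → j ≤ N → 0 < u j
  · exfalso
    obtain ⟨g, hgne, hgeq⟩ := hE1
    set gh := PathAux.extV hN1 g with hgh
    have hveq : (fun i : Fin N => gh ((i:ℕ)+1)) = g := PathAux.extV_vec hN1 g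
    have hrecg := PathAux.rec_of_eigen hN W l1 gh (PathAux.extV_zero hN1 g)
      (PathAux.extV_top hN1 g) (by rw [hveq]; exact hgeq)
    have hrecu' : ∀ j, 1 ≤ j → j ≤ N → u (j-1) + u (j+1) = ((2 + W j) - l2) * u j := by
      intro j a b; have := hrecu j a b; linarith
    have hrecg' : ∀ j, 1 ≤ j → j ≤ N → gh (j-1) + gh (j+1) = ((2 + W j) - l1) * gh j := by
      intro j a b; have := hrecg j a b; linarith
    have hex : (∃ j, 1 ≤ j ∧ j ≤ N ∧ 0 < gh j) ∨ (∃ j, 1 ≤ j ∧ j ≤ N ∧ 0 < -(gh j)) := by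
      have hexne : ∃ i : Fin N, g i ≠ 0 := by
        by_contra hcon; push_neg at hcon; exact hgne (funext fun i => hcon i)
      obtain ⟨i, hi⟩ := hexne
      have hgi : gh ((i:ℕ)+1) = g i := congrFun hveq i
      rcases lt_or_gt_of_ne hi with hlt | hgt
      · right; exact ⟨(i:ℕ)+1, by omega, by omega, by rw [hgi]; linarith⟩
      · left; exact ⟨(i:ℕ)+1, by omega, by omega, by rw [hgi]; linarith⟩
    rcases hex with hj | hj
    · exact PathAux.caseA hN l1 l2 hl12 (fun j => 2 + W j) u gh hrecu' hrecg'
        hl hr (PathAux.extV_zero hN1 g) (PathAux.extV_top hN1 g) hall hj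
    · have hrecg'' : ∀ j, 1 ≤ j → j ≤ N →
          (-(gh (j-1))) + (-(gh (j+1))) = ((2 + W j) - l1) * (-(gh j)) := by
        intro j a b; have := hrecg' j a b; linarith
      exact PathAux.caseA hN l1 l2 hl12 (fun j => 2 + W j) u (fun j => -(gh j))
        hrecu' hrecg'' hl hr
        (by exact congrArg Neg.neg (PathAux.extV_zero hN1 g))
        (by exact congrArg Neg.neg (PathAux.extV_top hN1 g)) hall hj
  · push_neg at hall
    obtain ⟨j₀, hj₀1, hj₀N, hj₀le⟩ := hall
    have hPex : ∃ t, 1 ≤ t ∧ t ≤ N ∧ u t ≤ 0 := ⟨j₀, hj₀1, hj₀N, hj₀le⟩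
    set t := Nat.find hPex with ht
    obtain ⟨ht1, htN, hut⟩ : 1 ≤ t ∧ t ≤ N ∧ u t ≤ 0 := Nat.find_spec hPex
    have hpos : ∀ m, 1 ≤ m → m < t → 0 < u m := by
      intro m h1 h2
      by_contra hc
      push_neg at hc
      exact Nat.find_min hPex h2 ⟨h1, by omega, hc⟩
    have ht2 : 2 ≤ t := by
      by_contra hc
      have : t = 1 := by omega
      rw [this] at hut
      linarith
    set d := u (t-1) - u t with hd
    have hut1 : 0 < u (t-1) := hpos (t-1) (by omega) (by omega)
    have hdpos : 0 < d := by rw [hd]; linarith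
    set r := u (t-1) / d with hrr
    have hr0 : 0 < r := div_pos hut1 hdpos
    have hr1 : r ≤ 1 := by rw [hrr, div_le_one hdpos]; rw [hd]; linarith
    have hcastt : ((t-1:ℕ):ℝ) = (t:ℝ) - 1 := by
      rw [Nat.cast_sub (by omega)]; norm_num
    set x0 : ℝ := ((t-1 : ℕ) : ℝ) + r with hx0def
    by_cases hx0 : x0 ≤ ((N:ℝ)+1)/2
    · refine ⟨t-1, by omega, by omega, x0, by rw [hx0def]; linarith,
        by rw [hx0def]; linarith, hx0, ?_⟩
      rw [show t-1+1 = t from by omega]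
      have e1 : ((t-1:ℕ):ℝ) + 1 - x0 = 1 - r := by rw [hx0def]; ring
      have e2 : x0 - ((t-1:ℕ):ℝ) = r := by rw [hx0def]; ring
      rw [e1, e2, hrr, hd]
      have hd0 : u (t-1) - u t ≠ 0 := ne_of_gt (by linarith)
      have := mul_inv_cancel₀ hd0
      linear_combination (-(u (t-1))) * this
    · exfalso
      have hx0' : ((N:ℝ)+1)/2 < x0 := lt_of_not_ge hx0
      have h2t : N + 2 ≤ 2*t := by
        have hxle : x0 ≤ (t:ℝ) := by rw [hx0def, hcastt]; linarith
        have h1 : (N:ℝ)+1 < 2*(t:ℝ) := by linarith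
        have h2 : (N+1 : ℕ) < 2*t := by exact_mod_cast h1
        omega
      obtain ⟨g, hgne, hgeq⟩ := hE1
      have hneg : ∀ j, t ≤ j → j ≤ N → u j ≤ 0 := by
        by_contra hcon
        push_neg at hcon
        obtain ⟨j, hjt, hjN, hjpos⟩ := hcon
        have hjt1 : t + 1 ≤ j := by
          rcases Nat.eq_or_lt_of_le hjt with hh | hh
          · exfalso; rw [← hh] at hjpos; linarith
          · omega
        have hQex : ∃ s, t ≤ s ∧ 0 < u (s+1) :=
          ⟨j-1, by omega, by rw [show j-1+1 = j from by omega]; exact hjpos⟩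
        set s := Nat.find hQex with hs
        obtain ⟨hts, hus1⟩ : t ≤ s ∧ 0 < u (s+1) := Nat.find_spec hQex
        have hsle : s ≤ j - 1 := Nat.find_le ⟨by omega, by
          rw [show j-1+1 = j from by omega]; exact hjpos⟩
        have hsN : s + 1 ≤ N := by omega
        have hmid : ∀ m, t ≤ m → m ≤ s → u m ≤ 0 := by
          intro m h1 h2
          rcases Nat.eq_or_lt_of_le h1 with hh | hh
          · rw [← hh]; exact hut
          · have hmin' := Nat.find_min hQex (show m - 1 < s by omega)
            by_contra hcu
            push_neg at hcu
            exact hmin' ⟨by omega, by rw [show m-1+1 = m from by omega]; exact hcu⟩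
        exact PathAux.no_second_rise hN W l1 l2 u hl hr hue hu1 g hgeq hgne hmin
          t s ht2 hts hsN hpos hmid hus1
      -- Wronskian with the reflection
      set a := N + 1 - t with ha
      have ha1 : 1 ≤ a := by omega
      have hat : a ≤ t - 1 := by omega
      set Wr : ℕ → ℝ := fun m => u (m+1) * u (N+1-m) - u m * u (N-m) with hWr
      have hstep : ∀ i, 1 ≤ i → i ≤ N →
          Wr i - Wr (i-1) = α * (2*(i:ℝ) - 1 - N) * (u i * u (N+1-i)) := by
        intro i h1 h2
        have e1 := hrecu i h1 h2
        have e2 := hrecu (N+1-i) (by omega) (by omega)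
        rw [show (N+1-i)-1 = N-i from by omega,
          show (N+1-i)+1 = N+2-i from by omega] at e2
        have hcast : ((N+1-i : ℕ) : ℝ) = (N:ℝ) + 1 - i := by
          rw [Nat.cast_sub (by omega)]; push_cast; ring
        have e2' : u (N-i) + u (N+2-i)
            = (2 + α * ((N:ℝ) + 1 - i - 1) - l2) * u (N+1-i) := by
          rw [← hcast]; exact e2
        have hw1 : Wr i = u (i+1) * u (N+1-i) - u i * u (N-i) := rfl
        have hw2 : Wr (i-1) = u i * u (N+2-i) - u (i-1) * u (N+1-i) := by
          show u ((i-1)+1) * u (N+1-(i-1)) - u (i-1) * u (N-(i-1)) = _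
          rw [show (i-1)+1 = i from by omega, show N+1-(i-1) = N+2-i from by omega,
            show N-(i-1) = N+1-i from by omega]
        rw [hw1, hw2]
        linear_combination (u (N+1-i)) * e1 - (u i) * e2'
      have htel : ∀ m, m ≤ N →
          Wr m = ∑ i ∈ Finset.Icc 1 m, α * (2*(i:ℝ) - 1 - N) * (u i * u (N+1-i)) := by
        intro m
        induction m with
        | zero =>
          intro _
          have h0 : Wr 0 = u 1 * u (N+1) - u 0 * u N := rfl
          rw [h0, hr, hl]
          simp
        | succ m ih =>
          intro hm
          rw [Finset.sum_Icc_succ_top (by omega : 1 ≤ m+1), ← ih (by omega)]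
          have := hstep (m+1) (by omega) (by omega)
          rw [show (m+1)-1 = m from rfl] at this
          linarith
      have hWa := htel a (by omega)
      have hWanonneg : 0 ≤ Wr a := by
        rw [hWa]
        apply Finset.sum_nonneg
        intro i hi
        rw [Finset.mem_Icc] at hi
        have hui : 0 < u i := hpos i hi.1 (by omega)
        have hvi : u (N+1-i) ≤ 0 := hneg (N+1-i) (by omega) (by omega)
        have h2i : 2*i ≤ N := by omega
        have hcoef : 2*(i:ℝ) - 1 - N ≤ 0 := by
          have : (2*i : ℝ) ≤ (N:ℝ) := by exact_mod_cast h2i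
          push_cast at this ⊢
          linarith
        have hprod : u i * u (N+1-i) ≤ 0 := mul_nonpos_of_nonneg_of_nonpos hui.le hvi
        have h00 : 0 ≤ (-(2*(i:ℝ) - 1 - N)) * (-(u i * u (N+1-i))) :=
          mul_nonneg (neg_nonneg.2 hcoef) (neg_nonneg.2 hprod)
        nlinarith [h00]
      have hWaval : Wr a = u (a+1) * u t - u a * u (t-1) := by
        show u (a+1) * u (N+1-a) - u a * u (N-a) = _
        rw [show N+1-a = t from by omega, show N-a = t-1 from by omega]
      rcases Nat.eq_or_lt_of_le h2t with hbd | hbd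
      · have haa : a + 1 = t := by omega
        have haa2 : a = t-1 := by omega
        have hrhalf : 1/2 < r := by
          have hNcast : (N:ℝ) = 2*(t:ℝ) - 2 := by
            have : ((N+2 : ℕ) : ℝ) = ((2*t : ℕ) : ℝ) := by rw [hbd]
            push_cast at this
            linarith
          rw [hx0def, hcastt] at hx0'
          rw [hNcast] at hx0'
          linarith
        have hsum : 0 < u (t-1) + u t := by
          rw [hrr] at hrhalf
          have hh := (lt_div_iff₀ hdpos).mp hrhalf
          rw [hd] at hh
          linarith
        have hneg2 : Wr a < 0 := by
          rw [hWaval, haa, haa2]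
          nlinarith [hut1, hut, hsum]
        linarith
      · have hp1 : 0 < u (a+1) := hpos (a+1) (by omega) (by omega)
        have hp2 : 0 < u a := hpos a (by omega) (by omega)
        have hneg2 : Wr a < 0 := by
          rw [hWaval]
          nlinarith [hut, hut1]
        linarith
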